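/- For every n ≥ 1, every subgroup of DihedralGroup n is either a cyclic group or is isomorphic to DihedralGroup m for some divisor m of n. -/

import Mathlib

open DihedralGroup

namespace DGAux

variable {n : ℕ}

/-- The subgroup of rotations of `DihedralGroup n`. -/
def rotations (n : ℕ) : Subgroup (DihedralGroup n) where
  carrier := {x | ∃ i, x = r i}
  one_mem' := ⟨0, rfl⟩
  mul_mem' := by rintro _ _ ⟨i, rfl⟩ ⟨j, rfl⟩; exact ⟨i + j, (r_mul_r i j)⟩
  inv_mem' := by rintro _ ⟨i, rfl⟩; exact ⟨-i, rfl⟩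

instance (n : ℕ) [NeZero n] : IsCyclic (rotations n) := by
  refine ⟨⟨⟨r 1, ⟨1, rfl⟩⟩, ?_⟩⟩
  rintro ⟨x, i, rfl⟩
  refine ⟨(i.val : ℤ), ?_⟩
  ext
  push_cast
  show (r 1 : DihedralGroup n) ^ (i.val : ℕ) = r i
  rw [r_one_pow, ZMod.natCast_val, ZMod.cast_id]

end DGAux

/-- Every subgroup of the dihedral group `DihedralGroup n` (of order `2n`, `n ≥ 1`) is either
cyclic or isomorphic to a dihedral group `DihedralGroup m` for some divisor `m` of `n`. -/
theorem subgroup_dihedralGroup_isCyclic_or_dihedral (n : ℕ) (hn : 1 ≤ n)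
    (H : Subgroup (DihedralGroup n)) :
    IsCyclic H ∨ ∃ m : ℕ, m ∣ n ∧ Nonempty (H ≃* DihedralGroup m) := by
  have : NeZero n := ⟨by omega⟩
  by_cases hs : ∃ j, sr j ∈ H
  · right
    obtain ⟨j, hj⟩ := hs
    -- the rotation part of H, as an additive subgroup of ZMod n
    set R : AddSubgroup (ZMod n) :=
      { carrier := {i | r i ∈ H}
        zero_mem' := by show r 0 ∈ H; rw [← DihedralGroup.one_def]; exact H.one_mem
        add_mem' := by
          intro a b ha hb
          have := H.mul_mem ha hb
          simpa [r_mul_r] using this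
        neg_mem' := by
          intro a ha
          have h2 := H.inv_mem ha
          have : (r a : DihedralGroup n)⁻¹ = r (-a) := rfl
          rwa [this] at h2 } with hR
    obtain ⟨⟨g, hgR⟩, hg⟩ := IsAddCyclic.exists_generator (α := R)
    have hzm : AddSubgroup.zmultiples g = R := by
      apply le_antisymm
      · rintro _ ⟨k, rfl⟩
        exact AddSubgroup.zsmul_mem R hgR k
      · intro x hx
        obtain ⟨k, hk⟩ := hg ⟨x, hx⟩
        exact ⟨k, congrArg Subtype.val hk⟩
    set m := addOrderOf g with hm
    have hmpos : 0 < m := addOrderOf_pos g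
    have : NeZero m := ⟨hmpos.ne'⟩
    have hmn : m ∣ n := by
      have := addOrderOf_dvd_card (x := g)
      rwa [ZMod.card] at this
    -- the additive hom ZMod m →+ ZMod n sending 1 to g
    set φ : ZMod m →+ ZMod n :=
      ZMod.lift m ⟨zmultiplesHom _ g, by
        simpa [zmultiplesHom_apply, natCast_zsmul] using addOrderOf_nsmul_eq_zero g⟩ with hφ
    have hφ_coe : ∀ k : ℤ, φ (k : ZMod m) = k • g := fun k => ZMod.lift_coe m _ k
    have hφ_val : ∀ x : ZMod m, φ x = (x.val : ℤ) • g := by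
      intro x
      conv_lhs => rw [← ZMod.natCast_rightInverse x]
      rw [← Int.cast_natCast, hφ_coe]
    have hφ_inj : Function.Injective φ := by
      rw [injective_iff_map_eq_zero]
      intro x hx
      rw [hφ_val, natCast_zsmul] at hx
      have hdvd : m ∣ x.val := addOrderOf_dvd_of_nsmul_eq_zero hx
      have hlt : x.val < m := ZMod.val_lt x
      have : x.val = 0 := Nat.eq_zero_of_dvd_of_lt hdvd hlt
      calc x = (x.val : ZMod m) := (ZMod.natCast_rightInverse x).symm
        _ = 0 := by rw [this]; simp
    have hφ_range : ∀ i : ZMod n, (∃ k, φ k = i) ↔ i ∈ R := by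
      intro i
      constructor
      · rintro ⟨k, rfl⟩
        rw [hφ_val]
        rw [← hzm]
        exact AddSubgroup.zsmul_mem _ (AddSubgroup.mem_zmultiples g) _
      · intro hi
        rw [← hzm] at hi
        obtain ⟨k, hk⟩ := hi
        exact ⟨(k : ZMod m), by rw [hφ_coe]; exact hk⟩
    -- the homomorphism from DihedralGroup m
    set F : DihedralGroup m → DihedralGroup n := fun x =>
      match x with
      | .r i => r (φ i)
      | .sr i => sr (j + φ i) with hF
    have hFr : ∀ i, F (r i) = r (φ i) := fun _ => rfl
    have hFsr : ∀ i, F (sr i) = sr (j + φ i) := fun _ => rfl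
    have hFmul : ∀ x y : DihedralGroup m, F (x * y) = F x * F y := by
      intro x y
      cases x with
      | r a =>
        cases y with
        | r b => simp only [r_mul_r, hFr, map_add]
        | sr b =>
          simp only [r_mul_sr, hFsr, hFr, map_sub]
          ring_nf
      | sr a =>
        cases y with
        | r b =>
          simp only [sr_mul_r, hFsr, hFr, map_add]
          ring_nf
        | sr b =>
          simp only [sr_mul_sr, hFsr, hFr, map_sub]
          ring_nf
    set f : DihedralGroup m →* DihedralGroup n := MonoidHom.mk' F hFmul with hf
    have hf_inj : Function.Injective f := by
      intro x y hxy
      cases x with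
      | r a =>
        cases y with
        | r b =>
          simp only [f, MonoidHom.mk'_apply, hFr, DihedralGroup.r.injEq] at hxy ⊢
          exact hφ_inj hxy
        | sr b => simp [f, MonoidHom.mk'_apply, hFr, hFsr] at hxy
      | sr a =>
        cases y with
        | r b => simp [f, MonoidHom.mk'_apply, hFr, hFsr] at hxy
        | sr b =>
          simp only [f, MonoidHom.mk'_apply, hFsr, DihedralGroup.sr.injEq] at hxy ⊢
          exact hφ_inj (add_left_cancel hxy)
    have hf_range : f.range = H := by
      ext x
      constructor
      · rintro ⟨y, rfl⟩
        cases y with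
        | r a =>
          show r (φ a) ∈ H
          exact (hφ_range (φ a)).1 ⟨a, rfl⟩
        | sr a =>
          show sr (j + φ a) ∈ H
          have h1 : φ a ∈ R := (hφ_range (φ a)).1 ⟨a, rfl⟩
          have : sr j * r (φ a) ∈ H := H.mul_mem hj h1
          rwa [sr_mul_r] at this
      · intro hx
        cases x with
        | r i =>
          obtain ⟨k, hk⟩ := (hφ_range i).2 hx
          exact ⟨r k, by rw [hf, MonoidHom.mk'_apply, hFr, hk]⟩
        | sr i =>
          have h1 : sr j * sr i ∈ H := H.mul_mem hj hx
          rw [sr_mul_sr] at h1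
          obtain ⟨k, hk⟩ := (hφ_range (i - j)).2 h1
          refine ⟨sr k, ?_⟩
          rw [hf, MonoidHom.mk'_apply, hFsr, hk]
          congr 1
          ring
    refine ⟨m, hmn, ⟨?_⟩⟩
    exact (MulEquiv.subgroupCongr hf_range.symm).trans (MonoidHom.ofInjective hf_inj).symm
  · left
    have hle : H ≤ DGAux.rotations n := by
      intro x hx
      cases x with
      | r i => exact ⟨i, rfl⟩
      | sr i => exact absurd ⟨i, hx⟩ hs
    exact Subgroup.isCyclic_of_le hle
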